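/- arXiv:1802.01920 — 3 statements merged into one kernel-verified Lean document; each statement's English description precedes it below -/
import Mathlib

section
/- Let B ∈ K[x]^{k×μ} be a basis of the left kernel of a matrix M ∈ K[x]^{μ×ν} (i.e., the rows of B generate {v ∈ K[x]^{1×μ} | vM = 0} and B has full row rank). Then any column basis S of B is unimodular; equivalently, there exists U ∈ K[x]^{μ×k} such that B·U = I_k. -/
open Polynomial Matrix

noncomputable section

def rowsBasis {k μ : ℕ} {K : Type*} [Field K] (B : Matrix (Fin k) (Fin μ) K[X])
    (N : Submodule K[X] (Fin μ → K[X])) : Prop :=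
  LinearIndependent K[X] (fun i => B i) ∧
    Submodule.span K[X] (Set.range fun i => B i) = N

set_option maxHeartbeats 1000000 in
set_option synthInstance.maxHeartbeats 400000 in
/-- Any column basis of a kernel basis is unimodular; equivalently `B * U = 1` for some `U`. -/
theorem column_basis_of_kernel_basis_unimodular
    {K : Type*} [Field K] {k μ ν : ℕ}
    (M : Matrix (Fin μ) (Fin ν) K[X]) (B : Matrix (Fin k) (Fin μ) K[X])
    (hB : rowsBasis B (LinearMap.ker (Matrix.vecMulLinear M)))
    (S : Matrix (Fin k) (Fin k) K[X])
    (hSind : LinearIndependent K[X] (fun j : Fin k => fun i : Fin k => S i j))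
    (hSspan : Submodule.span K[X] (Set.range fun j : Fin k => fun i : Fin k => S i j)
      = Submodule.span K[X] (Set.range fun j : Fin μ => fun i : Fin k => B i j)) :
    IsUnit S.det ∧ ∃ U : Matrix (Fin μ) (Fin k) K[X], B * U = 1 := by
  classical
  obtain ⟨hBind, hBspan⟩ := hB
  -- rows of B annihilate M
  have hBM : B * M = 0 := by
    ext i j
    have hi : B i ∈ LinearMap.ker M.vecMulLinear := by
      rw [← hBspan]; exact Submodule.subset_span ⟨i, rfl⟩
    have h0 : B i ᵥ* M = 0 := by
      simpa [Matrix.vecMulLinear_apply] using LinearMap.mem_ker.mp hi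
    rw [Matrix.mul_apply_eq_vecMul, h0]; rfl
  have hinj : Function.Injective B.vecMul := Matrix.vecMul_injective_iff.mpr hBind
  -- key divisibility property of a kernel basis
  have star : ∀ p : K[X], p ≠ 0 → ∀ w : Fin k → K[X],
      (∀ j, p ∣ (w ᵥ* B) j) → ∀ i, p ∣ w i := by
    intro p hp w hw
    choose c hc using hw
    have hwB : w ᵥ* B = p • c := by
      funext j; simpa [Pi.smul_apply, smul_eq_mul] using hc j
    have hcM : c ᵥ* M = 0 := by
      have h1 : (w ᵥ* B) ᵥ* M = 0 := by
        rw [Matrix.vecMul_vecMul, hBM, Matrix.vecMul_zero]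
      rw [hwB, Matrix.smul_vecMul] at h1
      funext j
      have := congrFun h1 j
      simp only [Pi.smul_apply, smul_eq_mul, Pi.zero_apply] at this ⊢
      rcases mul_eq_zero.mp this with h | h
      · exact absurd h hp
      · exact h
    have hcker : c ∈ LinearMap.ker M.vecMulLinear := by
      rw [LinearMap.mem_ker, Matrix.vecMulLinear_apply, hcM]
    rw [← hBspan, show (Set.range fun i => B i) = Set.range B.row from rfl, ← range_vecMulLinear] at hcker
    obtain ⟨u, hu⟩ := hcker
    have heq : w ᵥ* B = (p • u) ᵥ* B := by
      rw [hwB, Matrix.smul_vecMul]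
      congr 1
      rw [← hu, Matrix.vecMulLinear_apply]
    have hw' : w = p • u := hinj heq
    intro i
    exact ⟨u i, by rw [hw']; simp [Pi.smul_apply, smul_eq_mul]⟩
  -- the columns of B span everything
  have key : LinearMap.range B.mulVecLin = ⊤ := by
    by_contra hne
    haveI : IsCoatomic (Submodule K[X] (Fin k → K[X])) :=
      isCoatomic_of_orderTop_gt_wellFounded (isNoetherian_iff.mp inferInstance)
    obtain ⟨M', hcoatom, hle⟩ :=
      (IsCoatomic.eq_top_or_exists_le_coatom (LinearMap.range B.mulVecLin)).resolve_left hne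
    haveI hsimple : IsSimpleModule K[X] ((Fin k → K[X]) ⧸ M') :=
      isSimpleModule_iff_isCoatom.mpr hcoatom
    have hmax : (Module.annihilator K[X] ((Fin k → K[X]) ⧸ M')).IsMaximal :=
      IsSimpleModule.annihilator_isMaximal
    set A := Module.annihilator K[X] ((Fin k → K[X]) ⧸ M') with hA
    set q : K[X] := Submodule.IsPrincipal.generator A with hq
    have hqA : q ∈ A := Submodule.IsPrincipal.generator_mem A
    have hspanA : Ideal.span {q} = A := Ideal.span_singleton_generator A
    have hqsmul : ∀ v : Fin k → K[X], q • v ∈ M' := by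
      intro v
      have h1 := (Module.mem_annihilator.mp hqA) (Submodule.Quotient.mk v)
      rwa [← Submodule.Quotient.mk_smul, Submodule.Quotient.mk_eq_zero] at h1
    have hq0 : q ≠ 0 := by
      intro h
      have hAbot : A = ⊥ := by
        rw [← hspanA, h, Ideal.span_singleton_eq_bot]
      rw [hAbot] at hmax
      have hXtop : Ideal.span {(Polynomial.X : K[X])} = ⊤ := by
        refine hmax.out.2 _ ?_
        rw [bot_lt_iff_ne_bot, Ne, Ideal.span_singleton_eq_bot]
        exact Polynomial.X_ne_zero
      exact Polynomial.not_isUnit_X (Ideal.span_singleton_eq_top.mp hXtop)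
    haveI hPmax : (Ideal.span {q}).IsMaximal := by rw [hspanA]; exact hmax
    letI : Field (K[X] ⧸ Ideal.span {q}) := Ideal.Quotient.field _
    set mk : K[X] →+* K[X] ⧸ Ideal.span {q} := Ideal.Quotient.mk _ with hmk
    set Bq : Matrix (Fin k) (Fin μ) (K[X] ⧸ Ideal.span {q}) := B.map mk with hBq
    have hindq : LinearIndependent (K[X] ⧸ Ideal.span {q}) (fun i => Bq i) := by
      rw [Fintype.linearIndependent_iff]
      intro g hg i
      choose w hw using fun i => Ideal.Quotient.mk_surjective (g i)
      have hdvd : ∀ j, q ∣ (w ᵥ* B) j := by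
        intro j
        rw [← Ideal.Quotient.eq_zero_iff_dvd]
        have h1 := congrFun hg j
        simp only [Finset.sum_apply, Pi.smul_apply, smul_eq_mul, Pi.zero_apply] at h1
        calc Ideal.Quotient.mk (Ideal.span {q}) ((w ᵥ* B) j)
            = ∑ i, g i * Bq i j := by
              simp [Matrix.vecMul, dotProduct, map_sum, hBq, Matrix.map_apply, ← hw, hmk]
          _ = 0 := h1
      have h2 := star q hq0 w hdvd i
      rw [← hw i, Ideal.Quotient.eq_zero_iff_dvd]
      exact h2
    have hrankq : LinearMap.range Bq.mulVecLin = ⊤ := by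
      apply Submodule.eq_top_of_finrank_eq
      have h1 : Bq.rank = k := by
        simpa using LinearIndependent.rank_matrix (M := Bq) hindq
      rw [Matrix.rank] at h1
      rw [h1, Module.finrank_pi]
      simp
    -- every vector lies in M'
    have hall : ∀ v : Fin k → K[X], v ∈ M' := by
      intro v
      have hmem : (fun i => mk (v i)) ∈ LinearMap.range Bq.mulVecLin := by
        rw [hrankq]; trivial
      obtain ⟨ub, hub⟩ := hmem
      rw [Matrix.mulVecLin_apply] at hub
      choose u hu using fun j => Ideal.Quotient.mk_surjective (ub j)
      have hcomp : ∀ i, q ∣ (v - B.mulVec u) i := by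
        intro i
        rw [← Ideal.Quotient.eq_zero_iff_dvd]
        have h1 : mk (B.mulVec u i) = Bq.mulVec ub i := by
          simp [Matrix.mulVec, dotProduct, map_sum, hBq, Matrix.map_apply, ← hu, hmk]
        have h2 := congrFun hub i
        simp only [Pi.sub_apply, map_sub]
        rw [h1, h2]
        simp [hmk]
      choose a ha using hcomp
      have hvdecomp : v = B.mulVec u + q • a := by
        funext i
        have := ha i
        simp only [Pi.sub_apply] at this
        simp only [Pi.add_apply, Pi.smul_apply, smul_eq_mul]
        exact sub_eq_iff_eq_add'.mp this
      rw [hvdecomp]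
      exact Submodule.add_mem _ (hle ⟨u, rfl⟩) (hqsmul a)
    exact hcoatom.1 (top_unique fun v _ => hall v)
  -- extract the right inverse of B
  have hsurjB : Function.Surjective B.mulVec := by
    intro v
    have hv : v ∈ LinearMap.range B.mulVecLin := by rw [key]; trivial
    obtain ⟨u, hu⟩ := hv
    exact ⟨u, by rw [← Matrix.mulVecLin_apply, hu]⟩
  obtain ⟨U, hU⟩ := Matrix.mulVec_surjective_iff_exists_right_inverse.mp hsurjB
  -- the column span of S is everything
  have hScols : LinearMap.range S.mulVecLin = ⊤ := by
    rw [Matrix.range_mulVecLin]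
    have h1 : (Set.range S.col) = (Set.range fun j : Fin k => fun i : Fin k => S i j) := rfl
    have h2 : (Set.range fun j : Fin μ => fun i : Fin k => B i j) = Set.range B.col := rfl
    rw [h1, hSspan, h2, ← Matrix.range_mulVecLin, key]
  have hsurjS : Function.Surjective S.mulVec := by
    intro v
    have hv : v ∈ LinearMap.range S.mulVecLin := by rw [hScols]; trivial
    obtain ⟨u, hu⟩ := hv
    exact ⟨u, by rw [← Matrix.mulVecLin_apply, hu]⟩
  obtain ⟨T, hT⟩ := Matrix.mulVec_surjective_iff_exists_right_inverse.mp hsurjS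
  refine ⟨IsUnit.of_mul_eq_one (a := S.det) T.det ?_, U, hU⟩
  rw [← Matrix.det_mul, hT, Matrix.det_one]
end
end

section
/- Let P ∈ K[x]^{m×m} be s-reduced for a shift s ∈ Z^m. Then deg(det(P)) equals the sum of the s-row degrees of P minus the sum of the entries of s. In particular, det(P) is a nonzero monomial if and only if det(P) = det(P(1)) · x^Δ where Δ = Σ_i rdeg_s(row i of P) − Σ_j s_j. -/
open Polynomial Matrix

noncomputable section

def sRowDeg {m : ℕ} {K : Type*} [Field K] (s : Fin m → ℤ)
    (P : Matrix (Fin m) (Fin m) K[X]) (i : Fin m) : WithBot ℤ :=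
  Finset.univ.sup fun j => WithBot.map (fun k : ℕ => (k : ℤ) + s j) (P i j).degree

def sLeadingMatrix {m : ℕ} {K : Type*} [Field K] (s : Fin m → ℤ)
    (P : Matrix (Fin m) (Fin m) K[X]) : Matrix (Fin m) (Fin m) K :=
  Matrix.of fun i j =>
    WithBot.recBotCoe 0
      (fun r => if 0 ≤ r - s j then (P i j).coeff (r - s j).toNat else 0)
      (sRowDeg s P i)

/-- `P` is `s`-reduced when its `s`-leading matrix is invertible. -/
def sReduced {m : ℕ} {K : Type*} [Field K] (s : Fin m → ℤ)
    (P : Matrix (Fin m) (Fin m) K[X]) : Prop :=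
  IsUnit (sLeadingMatrix s P).det

/-- Auxiliary: coefficient of a product of two polynomials at the sum of degree bounds. -/
lemma aux_coeff_mul_of_degree_le {K : Type*} [Semiring K] {f g : K[X]} {a b : ℕ}
    (hf : f.degree ≤ a) (hg : g.degree ≤ b) :
    (f * g).coeff (a + b) = f.coeff a * g.coeff b := by
  rw [coeff_mul, Finset.sum_eq_single (a, b)]
  · intro x hx hne
    rw [Finset.HasAntidiagonal.mem_antidiagonal] at hx
    have hx1 : x.1 ≠ a := by
      rintro h1
      exact hne (Prod.ext h1 (by omega))
    rcases lt_or_gt_of_ne hx1 with h | h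
    · have : (b : WithBot ℕ) < x.2 := by exact_mod_cast (by omega : b < x.2)
      rw [coeff_eq_zero_of_degree_lt (lt_of_le_of_lt hg this), mul_zero]
    · have : (a : WithBot ℕ) < x.1 := by exact_mod_cast h
      rw [coeff_eq_zero_of_degree_lt (lt_of_le_of_lt hf this), zero_mul]
  · intro h
    simp at h

/-- Auxiliary: degree bound for a product. -/
lemma aux_degree_prod_le {K : Type*} [CommSemiring K] {ι : Type*} (t : Finset ι)
    (f : ι → K[X]) (n : ι → ℕ) (h : ∀ i ∈ t, (f i).degree ≤ n i) :
    (∏ i ∈ t, f i).degree ≤ ((∑ i ∈ t, n i : ℕ) : WithBot ℕ) := by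
  refine le_trans (degree_prod_le t f) ?_
  rw [Nat.cast_sum]
  exact Finset.sum_le_sum h

/-- Auxiliary: coefficient of a product at the sum of degree bounds. -/
lemma aux_coeff_prod_of_degree_le {K : Type*} [CommSemiring K] {ι : Type*} (t : Finset ι)
    (f : ι → K[X]) (n : ι → ℕ) (h : ∀ i ∈ t, (f i).degree ≤ n i) :
    (∏ i ∈ t, f i).coeff (∑ i ∈ t, n i) = ∏ i ∈ t, (f i).coeff (n i) := by
  classical
  induction t using Finset.cons_induction with
  | empty => simp
  | cons a t ha ih =>
    rw [Finset.prod_cons, Finset.sum_cons,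
      aux_coeff_mul_of_degree_le (h a (Finset.mem_cons_self a t))
        (aux_degree_prod_le t f n fun i hi => h i (Finset.mem_cons_of_mem hi)),
      ih fun i hi => h i (Finset.mem_cons_of_mem hi), Finset.prod_cons]

lemma aux_zsmul_degree_le {K : Type*} [Ring K] (z : ℤˣ) (p : K[X]) :
    (z • p).degree ≤ p.degree := by
  rcases Int.units_eq_one_or z with h | h <;> subst h <;> simp

/-- Auxiliary determinant lemma over ℕ-degrees. -/
lemma aux_det_coeff {K : Type*} [CommRing K] {m : ℕ}
    (Q : Matrix (Fin m) (Fin m) K[X]) (n : Fin m → ℕ)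
    (h : ∀ i j, (Q i j).degree ≤ n i) :
    Q.det.degree ≤ ((∑ i, n i : ℕ) : WithBot ℕ) ∧
      Q.det.coeff (∑ i, n i) =
        Matrix.det (Matrix.of fun i j => (Q i j).coeff (n i)) := by
  classical
  constructor
  · rw [Matrix.det_apply]
    refine le_trans (degree_sum_le _ _) (Finset.sup_le fun σ _ => ?_)
    refine le_trans (aux_zsmul_degree_le _ _) ?_
    have : (∑ i, n i) = ∑ i, n (σ i) := (Equiv.sum_comp σ n).symm
    rw [this]
    exact aux_degree_prod_le Finset.univ _ _ fun i _ => h (σ i) i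
  · rw [Matrix.det_apply, Polynomial.finset_sum_coeff, Matrix.det_apply]
    refine Finset.sum_congr rfl fun σ _ => ?_
    rw [Polynomial.coeff_smul]
    congr 1
    have hs : (∑ i, n i) = ∑ i, n (σ i) := (Equiv.sum_comp σ n).symm
    rw [hs, aux_coeff_prod_of_degree_le Finset.univ _ _ fun i _ => h (σ i) i]
    simp

/-- For an `s`-reduced matrix, `deg det P = Σ rdeg_s(P) − Σ s`; in particular `det P`
is a nonzero monomial iff `det P = det(P(1))·x^Δ`. -/
theorem sReduced_det_degree
    {K : Type*} [Field K] {m : ℕ} (s : Fin m → ℤ)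
    (P : Matrix (Fin m) (Fin m) K[X]) (hred : sReduced s P) :
    ∃ Δ : ℕ, P.det.degree = (Δ : ℕ∞) ∧
      ((((Δ : ℤ) + ∑ j, s j : ℤ) : WithBot ℤ) = ∑ i, sRowDeg s P i) ∧
      ((∃ c : K, c ≠ 0 ∧ ∃ δ : ℕ, P.det = Polynomial.C c * X ^ δ) ↔
        P.det = Polynomial.C ((P.map (Polynomial.eval 1)).det) * X ^ Δ) := by
  classical
  have hL : (sLeadingMatrix s P).det ≠ 0 := hred.ne_zero
  have hrow : ∀ i, sRowDeg s P i ≠ ⊥ := by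
    intro i hbot
    exact hL (Matrix.det_eq_zero_of_row_eq_zero i fun j => by
      simp [sLeadingMatrix, hbot])
  set r : Fin m → ℤ := fun i => (sRowDeg s P i).unbot (hrow i) with hr
  have hrd : ∀ i, sRowDeg s P i = (r i : WithBot ℤ) := fun i =>
    (WithBot.coe_unbot _ (hrow i)).symm
  set c : ℤ := ∑ j, |s j| with hc
  have hsc : ∀ j, 0 ≤ s j + c := by
    intro j
    have h1 : |s j| ≤ c := Finset.single_le_sum (fun k _ => abs_nonneg (s k))
      (Finset.mem_univ j)
    have := neg_abs_le (s j)
    omega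
  have hrc : ∀ i, 0 ≤ r i + c := by
    intro i
    have : Nonempty (Fin m) := ⟨i⟩
    obtain ⟨j, -, hj⟩ := Finset.exists_mem_eq_sup Finset.univ Finset.univ_nonempty
      (fun j => WithBot.map (fun k : ℕ => (k : ℤ) + s j) (P i j).degree)
    have hj' : WithBot.map (fun k : ℕ => (k : ℤ) + s j) (P i j).degree
        = (r i : WithBot ℤ) := by rw [← hj, ← hrd i]; rfl
    have hne : P i j ≠ 0 := by
      intro h0
      rw [h0, degree_zero, WithBot.map_bot] at hj'
      exact absurd hj' (by simp)
    rw [degree_eq_natDegree hne, Nat.cast_withBot, WithBot.map_coe] at hj'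
    have hD : ((P i j).natDegree : ℤ) + s j = r i := by exact_mod_cast hj'
    have := hsc j
    omega
  set a : Fin m → ℕ := fun j => (s j + c).toNat with ha
  set n : Fin m → ℕ := fun i => (r i + c).toNat with hn
  have haz : ∀ j, (a j : ℤ) = s j + c := fun j => Int.toNat_of_nonneg (hsc j)
  have hnz : ∀ i, (n i : ℤ) = r i + c := fun i => Int.toNat_of_nonneg (hrc i)
  set Q : Matrix (Fin m) (Fin m) K[X] :=
    Matrix.of fun i j => P i j * X ^ a j with hQdef
  have hQdeg : ∀ i j, (Q i j).degree ≤ (n i : WithBot ℕ) := by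
    intro i j
    rcases eq_or_ne (P i j) 0 with h0 | h0
    · simp [hQdef, h0]
    · have hle : WithBot.map (fun k : ℕ => (k : ℤ) + s j) (P i j).degree
          ≤ (r i : WithBot ℤ) := by
        rw [← hrd i]
        exact Finset.le_sup
          (f := fun j' : Fin m =>
            WithBot.map (fun k : ℕ => (k : ℤ) + s j') (P i j').degree)
          (Finset.mem_univ j)
      have h2 : WithBot.map (fun k : ℕ => (k : ℤ) + s j) (P i j).degree
          = ((((P i j).natDegree : ℤ) + s j : ℤ) : WithBot ℤ) := by
        rw [degree_eq_natDegree h0, Nat.cast_withBot, WithBot.map_coe]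
      rw [h2, WithBot.coe_le_coe] at hle
      have hkey : (P i j).natDegree + a j ≤ n i := by
        have := haz j; have := hnz i; omega
      calc (Q i j).degree ≤ (P i j).degree + (X ^ a j : K[X]).degree :=
            degree_mul_le _ _
        _ ≤ (n i : WithBot ℕ) := by
            rw [degree_eq_natDegree h0, degree_X_pow, ← Nat.cast_add]
            exact_mod_cast hkey
  have hLQ : ∀ i j, (Q i j).coeff (n i) = sLeadingMatrix s P i j := by
    intro i j
    show (P i j * X ^ a j).coeff (n i) = _
    rw [coeff_mul_X_pow']
    simp only [sLeadingMatrix, hrd i, Matrix.of_apply, WithBot.recBotCoe_coe]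
    by_cases hij : 0 ≤ r i - s j
    · rw [if_pos hij, if_pos (by have := haz j; have := hnz i; omega)]
      congr 1
      have := haz j; have := hnz i; omega
    · rw [if_neg hij, if_neg (by have := haz j; have := hnz i; omega)]
  obtain ⟨hdegQ, hcoeffQ⟩ := aux_det_coeff Q n hQdeg
  have hLeq : (Matrix.of fun i j => (Q i j).coeff (n i)) = sLeadingMatrix s P := by
    ext i j; exact hLQ i j
  rw [hLeq] at hcoeffQ
  have hcoeff_ne : Q.det.coeff (∑ i, n i) ≠ 0 := by rw [hcoeffQ]; exact hL
  have hdegQ_eq : Q.det.degree = ((∑ i, n i : ℕ) : WithBot ℕ) :=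
    le_antisymm hdegQ (le_degree_of_ne_zero hcoeff_ne)
  have hQdet : Q.det = P.det * X ^ (∑ j, a j) := by
    have : Q = P * Matrix.diagonal (fun j => (X : K[X]) ^ a j) := by
      ext i j
      rw [Matrix.mul_diagonal]
      rfl
    rw [this, Matrix.det_mul, Matrix.det_diagonal, Finset.prod_pow_eq_pow_sum]
  have hPdet_ne : P.det ≠ 0 := by
    intro h0
    apply hcoeff_ne
    rw [hQdet, h0, zero_mul, coeff_zero]
  set Δ : ℕ := P.det.natDegree with hΔ
  have hdegP : P.det.degree = (Δ : WithBot ℕ) := degree_eq_natDegree hPdet_ne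
  have hsum : Δ + (∑ j, a j) = ∑ i, n i := by
    have : Q.det.degree = ((Δ + ∑ j, a j : ℕ) : WithBot ℕ) := by
      rw [hQdet, degree_mul, degree_X_pow, hdegP, ← Nat.cast_add]
    rw [hdegQ_eq] at this
    exact_mod_cast this.symm
  refine ⟨Δ, hdegP, ?_, ?_⟩
  · have hz : (Δ : ℤ) + ∑ j, s j = ∑ i, r i := by
      have h1 : ((Δ : ℤ)) + ∑ j, (a j : ℤ) = ∑ i, (n i : ℤ) := by
        exact_mod_cast congrArg (Nat.cast : ℕ → ℤ) hsum
      have h2 : ∑ j, (a j : ℤ) = (∑ j, s j) + m • c := by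
        rw [Finset.sum_congr rfl fun j _ => haz j, Finset.sum_add_distrib,
          Finset.sum_const, Finset.card_univ, Fintype.card_fin]
      have h3 : ∑ i, (n i : ℤ) = (∑ i, r i) + m • c := by
        rw [Finset.sum_congr rfl fun i _ => hnz i, Finset.sum_add_distrib,
          Finset.sum_const, Finset.card_univ, Fintype.card_fin]
      rw [h2, h3] at h1
      omega
    rw [Finset.sum_congr rfl fun i _ => hrd i, ← WithBot.coe_sum, ← hz]
  · constructor
    · rintro ⟨cc, hcc, δ, hdet⟩
      have hδ : (δ : WithBot ℕ) = (Δ : WithBot ℕ) := by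
        rw [← hdegP, hdet, degree_C_mul_X_pow δ hcc]
      have hδ' : δ = Δ := by exact_mod_cast hδ
      subst hδ'
      have heval : (P.map (Polynomial.eval 1)).det = Polynomial.eval 1 P.det := by
        have := (RingHom.map_det (Polynomial.evalRingHom (1 : K)) P).symm
        simpa [RingHom.mapMatrix_apply, Matrix.map] using this
      rw [heval, hdet]
      simp
    · intro h
      refine ⟨(P.map (Polynomial.eval 1)).det, ?_, Δ, h⟩
      intro h0
      apply hPdet_ne
      rw [h, h0, map_zero, zero_mul]
end
end

section
/- Let u·P = Σ_{k=0}^{D−1} p_k x^k with p_k ∈ K^{1×m}, let δ ≤ D be a positive integer, and let f = Σ_{k=0}^{δ−1} f_k x^k ∈ K[x]^{m×1}. For ζ ∈ K nonzero, define h_k = Σ_{i=0}^{k} p_{k−i} ζ^{−i} for 0 ≤ k < D. Then the evaluation of the truncation (u·P·f rem x^δ) at ζ equals ζ^{δ−1} · Σ_{k=0}^{δ−1} h_{δ−1−k} · f_k. -/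
open Polynomial Matrix

noncomputable section

/-- Evaluation of a truncated product: with `w = u·P` of degree `< D`, `f` of degree
`< δ` with `0 < δ ≤ D`, and `h_k = Σ_{i≤k} p_{k−i} ζ^{−i}`, the evaluation at `ζ ≠ 0` of
`(w·f rem x^δ)` equals `ζ^{δ−1} Σ_{k<δ} h_{δ−1−k}·f_k`. -/
theorem trunc_product_evaluation
    {K : Type*} [Field K] {m D δ : ℕ} (hδ : 0 < δ) (hδD : δ ≤ D)
    (w f : Fin m → K[X])
    (hw : ∀ i, (w i).degree < (D : ℕ∞))
    (hf : ∀ i, (f i).degree < (δ : ℕ∞))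
    (ζ : K) (hζ : ζ ≠ 0) :
    Polynomial.eval ζ ((∑ i, w i * f i) %ₘ (X : K[X]) ^ δ) =
      ζ ^ (δ - 1) * ∑ k ∈ Finset.range δ, ∑ i,
        (∑ j ∈ Finset.range (δ - k), (w i).coeff (δ - 1 - k - j) * ζ⁻¹ ^ j) *
          (f i).coeff k := by
  classical
  set g : K[X] := ∑ i, w i * f i with hg
  have hm : ((X : K[X]) ^ δ).Monic := monic_X_pow δ
  -- coefficients of the remainder agree with those of g below δ
  have hcoeff : ∀ n, n < δ → (g %ₘ (X : K[X]) ^ δ).coeff n = g.coeff n := by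
    intro n hn
    conv_rhs => rw [← modByMonic_add_div g ((X : K[X]) ^ δ)]
    rw [coeff_add, mul_comm, coeff_mul_X_pow', if_neg (by omega)]
    ring
  -- natDegree bound for the remainder
  have hdeg : (g %ₘ (X : K[X]) ^ δ).natDegree < δ := by
    have h1 : (g %ₘ (X : K[X]) ^ δ).degree < ((X : K[X]) ^ δ).degree :=
      degree_modByMonic_lt g hm
    rw [degree_X_pow] at h1
    by_cases h0 : g %ₘ (X : K[X]) ^ δ = 0
    · simpa [h0] using hδ
    · exact natDegree_lt_iff_degree_lt h0 |>.mpr h1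
  rw [eval_eq_sum_range' hdeg]
  -- LHS as a triple sum
  have hL : ∑ n ∈ Finset.range δ, (g %ₘ (X : K[X]) ^ δ).coeff n * ζ ^ n =
      ∑ n ∈ Finset.range δ, ∑ k ∈ Finset.range (n + 1), ∑ i,
        (w i).coeff (n - k) * (f i).coeff k * ζ ^ n := by
    refine Finset.sum_congr rfl fun n hn => ?_
    rw [Finset.mem_range] at hn
    rw [hcoeff n hn, hg, finset_sum_coeff, Finset.sum_mul]
    conv_rhs => rw [Finset.sum_comm]
    refine Finset.sum_congr rfl fun i _ => ?_
    rw [coeff_mul, Finset.Nat.sum_antidiagonal_eq_sum_range_succ_mk,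
      Finset.sum_mul, ← Finset.sum_range_reflect]
    refine Finset.sum_congr rfl fun k hk => ?_
    rw [Finset.mem_range] at hk
    have h1 : n - (n + 1 - 1 - k) = k := by omega
    have h2 : n + 1 - 1 - k = n - k := by omega
    rw [h1, h2]
  rw [hL]
  -- RHS: distribute ζ^(δ-1) and reindex
  rw [Finset.mul_sum]
  have hR : ∀ k ∈ Finset.range δ,
      ζ ^ (δ - 1) * ∑ i, (∑ j ∈ Finset.range (δ - k),
          (w i).coeff (δ - 1 - k - j) * ζ⁻¹ ^ j) * (f i).coeff k =
      ∑ n ∈ Finset.Ico k δ, ∑ i, (w i).coeff (n - k) * (f i).coeff k * ζ ^ n := by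
    intro k hk
    rw [Finset.mem_range] at hk
    rw [Finset.mul_sum]
    conv_rhs => rw [Finset.sum_comm]
    refine Finset.sum_congr rfl fun i _ => ?_
    rw [Finset.sum_Ico_eq_sum_range, Finset.sum_mul, Finset.mul_sum,
      ← Finset.sum_range_reflect]
    refine Finset.sum_congr rfl fun j hj => ?_
    rw [Finset.mem_range] at hj
    have h1 : δ - 1 - k - (δ - k - 1 - j) = j := by omega
    have h2 : ζ⁻¹ ^ (δ - k - 1 - j) = (ζ ^ (δ - k - 1 - j))⁻¹ := by
      rw [inv_pow]
    have h3 : ζ ^ (δ - 1) = ζ ^ (k + j) * ζ ^ (δ - k - 1 - j) := by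
      rw [← pow_add]; congr 1; omega
    rw [h1, h2, h3]
    field_simp
    rw [Nat.add_sub_cancel_left]
    ring
  rw [Finset.sum_congr rfl hR]
  have := Finset.sum_Ico_Ico_comm 0 δ
    (fun k n => ∑ i, (w i).coeff (n - k) * (f i).coeff k * ζ ^ n)
  simp only [← Finset.range_eq_Ico] at this
  exact this.symm
end
end
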